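/- For the 2×2 matrix L_t = [[1, 2t],[0, -1]] with t > 0, the conformal range DW_BCK^ℝ(L_t) equals the elliptical disk {(x,z) ∈ ℝ² : x²/1 + z²/(t²/(1+t²)) ≤ 1}, i.e. x² + ((1+t²)/t²)z² ≤ 1. -/

import Mathlib

open Complex Matrix

/-- The conformal range (real Davis–Wielandt shell) in the BCK model. -/
noncomputable def DWR (A : Matrix (Fin 2) (Fin 2) ℂ) : Set (ℝ × ℝ) :=
  {p : ℝ × ℝ | ∃ x : EuclideanSpace ℂ (Fin 2), x ≠ 0 ∧
      p = (2 * (inner ℂ x (Matrix.toEuclideanLin A x) : ℂ).re /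
            (‖Matrix.toEuclideanLin A x‖ ^ 2 + ‖x‖ ^ 2),
           (‖Matrix.toEuclideanLin A x‖ ^ 2 - ‖x‖ ^ 2) /
            (‖Matrix.toEuclideanLin A x‖ ^ 2 + ‖x‖ ^ 2))}

lemma quantities (t : ℝ) (x : EuclideanSpace ℂ (Fin 2)) :
    2 * (inner ℂ x (Matrix.toEuclideanLin !![(1 : ℂ), 2 * t; 0, -1] x) : ℂ).re
      = 2 * (normSq (x 0) - normSq (x 1) + 2*t*((x 0).re*(x 1).re + (x 0).im*(x 1).im))
  ∧ ‖Matrix.toEuclideanLin !![(1 : ℂ), 2 * t; 0, -1] x‖ ^ 2 + ‖x‖ ^ 2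
      = 2*normSq (x 0) + 2*normSq (x 1) + 4*t^2*normSq (x 1)
          + 4*t*((x 0).re*(x 1).re + (x 0).im*(x 1).im)
  ∧ ‖Matrix.toEuclideanLin !![(1 : ℂ), 2 * t; 0, -1] x‖ ^ 2 - ‖x‖ ^ 2
      = 4*t^2*normSq (x 1) + 4*t*((x 0).re*(x 1).re + (x 0).im*(x 1).im) := by
  have e0 : (Matrix.toEuclideanLin !![(1 : ℂ), 2 * t; 0, -1] x) 0 = x 0 + 2*(t:ℂ)*x 1 := by
    show (!![(1:ℂ), 2*t; 0, -1] *ᵥ (WithLp.equiv 2 _ x)) 0 = _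
    simp [Matrix.mulVec, dotProduct, Fin.sum_univ_two, Matrix.vecHead, Matrix.vecTail]
  have e1 : (Matrix.toEuclideanLin !![(1 : ℂ), 2 * t; 0, -1] x) 1 = - x 1 := by
    show (!![(1:ℂ), 2*t; 0, -1] *ᵥ (WithLp.equiv 2 _ x)) 1 = _
    simp [Matrix.mulVec, dotProduct, Fin.sum_univ_two, Matrix.vecHead, Matrix.vecTail]
  have hnx : ‖x‖ ^ 2 = normSq (x 0) + normSq (x 1) := by
    rw [EuclideanSpace.norm_eq, Real.sq_sqrt (by positivity)]
    simp [Fin.sum_univ_two, Complex.sq_norm]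
  have hnL : ‖Matrix.toEuclideanLin !![(1 : ℂ), 2 * t; 0, -1] x‖ ^ 2
      = normSq (x 0 + 2*(t:ℂ)*x 1) + normSq (x 1) := by
    rw [EuclideanSpace.norm_eq, Real.sq_sqrt (by positivity)]
    simp [Fin.sum_univ_two, e0, e1, Complex.sq_norm, Matrix.vecHead, Matrix.vecTail]
  have hinner : (inner ℂ x (Matrix.toEuclideanLin !![(1 : ℂ), 2 * t; 0, -1] x) : ℂ)
      = (starRingEnd ℂ (x 0)) * (x 0 + 2*(t:ℂ)*x 1) + (starRingEnd ℂ (x 1)) * (- x 1) := by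
    simp [PiLp.inner_apply, Fin.sum_univ_two, e0, e1, Matrix.vecHead, Matrix.vecTail]
    ring
  refine ⟨?_, ?_, ?_⟩
  · rw [hinner]
    simp [Complex.normSq_apply, Complex.add_re, Complex.mul_re, Complex.add_im, Complex.mul_im]
    ring
  · rw [hnL, hnx]
    simp [Complex.normSq_apply, Complex.add_re, Complex.add_im, Complex.mul_re, Complex.mul_im]
    ring
  · rw [hnL, hnx]
    simp [Complex.normSq_apply, Complex.add_re, Complex.add_im, Complex.mul_re, Complex.mul_im]
    ring

lemma mem_of (t u v r : ℝ) (hu : 0 ≤ u) (hv : 0 ≤ v) (hr : r^2 ≤ u*v) (hpos : 0 < u + v) :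
    ((2*(u - v + 2*t*r))/(2*u + 2*v + 4*t^2*v + 4*t*r),
     (4*t^2*v + 4*t*r)/(2*u + 2*v + 4*t^2*v + 4*t*r)) ∈ DWR !![(1 : ℂ), 2 * t; 0, -1] := by
  have main : ∀ a b : ℂ, ¬(a = 0 ∧ b = 0) → normSq a = u → normSq b = v →
      a.re*b.re + a.im*b.im = r →
      ((2*(u - v + 2*t*r))/(2*u + 2*v + 4*t^2*v + 4*t*r),
       (4*t^2*v + 4*t*r)/(2*u + 2*v + 4*t^2*v + 4*t*r)) ∈ DWR !![(1 : ℂ), 2 * t; 0, -1] := by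
    intro a b hab hna hnb hre
    set x : EuclideanSpace ℂ (Fin 2) := (WithLp.equiv 2 (Fin 2 → ℂ)).symm ![a, b] with hxdef
    have h0 : x 0 = a := rfl
    have h1 : x 1 = b := rfl
    have hxne : x ≠ 0 := by
      intro h
      apply hab
      constructor
      · rw [← h0, h]; rfl
      · rw [← h1, h]; rfl
    obtain ⟨q1, q2, q3⟩ := quantities t x
    simp only [h0, h1, hna, hnb, hre] at q1 q2 q3
    exact ⟨x, hxne, by rw [q1, q2, q3]⟩
  by_cases hu0 : u = 0
  · have hr0 : r = 0 := by nlinarith [sq_nonneg r]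
    have hv0 : 0 < v := by rw [hu0] at hpos; linarith
    refine main 0 (Real.sqrt v : ℂ) ?_ ?_ ?_ ?_
    · rintro ⟨-, h⟩
      rw [Complex.ofReal_eq_zero] at h
      exact absurd h (Real.sqrt_ne_zero'.mpr hv0)
    · simpa using hu0.symm
    · rw [Complex.normSq_ofReal, Real.mul_self_sqrt hv]
    · simp [hr0]
  · have hu' : 0 < u := lt_of_le_of_ne hu (Ne.symm hu0)
    have hs : Real.sqrt u ≠ 0 := ne_of_gt (Real.sqrt_pos.mpr hu')
    have hsq : Real.sqrt u ^ 2 = u := Real.sq_sqrt hu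
    have hw : Real.sqrt (u*v - r^2) ^ 2 = u*v - r^2 := Real.sq_sqrt (by linarith)
    refine main (Real.sqrt u : ℂ) ⟨r / Real.sqrt u, Real.sqrt (u*v - r^2) / Real.sqrt u⟩ ?_ ?_ ?_ ?_
    · rintro ⟨h, -⟩
      rw [Complex.ofReal_eq_zero] at h
      exact hs h
    · rw [Complex.normSq_ofReal, ← sq, hsq]
    · rw [Complex.normSq_mk]
      field_simp
      nlinarith [hsq, hw]
    · show Real.sqrt u * (r / Real.sqrt u) + (Complex.ofReal (Real.sqrt u)).im * _ = r
      rw [Complex.ofReal_im]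
      field_simp
      ring

lemma ell_aux (t P Q D : ℝ) (ht2 : 0 < t^2) (hD : 0 < D)
    (key : t^2*P^2 + (1+t^2)*Q^2 ≤ t^2*D^2) :
    (P/D)^2 + (1+t^2)/t^2*(Q/D)^2 ≤ 1 := by
  have h : (P/D)^2 + (1+t^2)/t^2*(Q/D)^2 = (t^2*P^2+(1+t^2)*Q^2)/(t^2*D^2) := by
    have ht0 : t ≠ 0 := by rintro rfl; norm_num at ht2
    field_simp
  rw [h, div_le_one (by positivity)]
  exact key

set_option maxHeartbeats 1000000 in
theorem DWR_Lt (t : ℝ) (ht : 0 < t) :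
    DWR !![(1 : ℂ), 2 * t; 0, -1] =
      {p : ℝ × ℝ | p.1 ^ 2 + ((1 + t ^ 2) / t ^ 2) * p.2 ^ 2 ≤ 1} := by
  have ht2 : (0:ℝ) < t^2 := by positivity
  ext p
  constructor
  · rintro ⟨x, hx, rfl⟩
    simp only [Set.mem_setOf_eq]
    obtain ⟨q1, q2, q3⟩ := quantities t x
    rw [q1, q2, q3]
    set ar := (x 0).re; set ai := (x 0).im; set br := (x 1).re; set bi := (x 1).im
    have hna : normSq (x 0) = ar^2 + ai^2 := by rw [Complex.normSq_apply]; ring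
    have hnb : normSq (x 1) = br^2 + bi^2 := by rw [Complex.normSq_apply]; ring
    rw [hna, hnb]
    have hxpos : 0 < ‖x‖ := norm_pos_iff.mpr hx
    have hD : 0 < 2*(ar^2+ai^2) + 2*(br^2+bi^2) + 4*t^2*(br^2+bi^2) + 4*t*(ar*br+ai*bi) := by
      have h2 := quantities t x |>.2.1
      rw [hna, hnb] at h2
      have : 0 < ‖Matrix.toEuclideanLin !![(1 : ℂ), 2 * t; 0, -1] x‖ ^ 2 + ‖x‖ ^ 2 := by
        have : (0:ℝ) ≤ ‖Matrix.toEuclideanLin !![(1 : ℂ), 2 * t; 0, -1] x‖ ^ 2 := sq_nonneg _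
        nlinarith [hxpos]
      linarith [h2 ▸ this]
    set D := 2*(ar^2+ai^2) + 2*(br^2+bi^2) + 4*t^2*(br^2+bi^2) + 4*t*(ar*br+ai*bi) with hDdef
    set P := 2*((ar^2+ai^2) - (br^2+bi^2) + 2*t*(ar*br+ai*bi)) with hPdef
    set Q := 4*t^2*(br^2+bi^2) + 4*t*(ar*br+ai*bi) with hQdef
    have key : t^2*P^2 + (1+t^2)*Q^2 ≤ t^2*D^2 := by
      have hid : t^2*D^2 - t^2*P^2 - (1+t^2)*Q^2 = 16*t^2*(1+t^2)*(ar*bi - ai*br)^2 := by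
        rw [hDdef, hPdef, hQdef]; ring
      nlinarith [mul_nonneg (mul_nonneg (mul_nonneg (by norm_num : (0:ℝ) ≤ 16) ht2.le)
        (by positivity : (0:ℝ) ≤ 1+t^2)) (sq_nonneg (ar*bi - ai*br))]
    exact ell_aux t P Q D ht2 hD key
  · intro hp
    simp only [Set.mem_setOf_eq] at hp
    obtain ⟨X, Z⟩ := p
    simp only at hp
    have hp' : t^2*X^2 + (1+t^2)*Z^2 ≤ t^2 := by
      have h := mul_le_mul_of_nonneg_left hp ht2.le
      have he : t^2 * (X^2 + (1+t^2)/t^2*Z^2) = t^2*X^2 + (1+t^2)*Z^2 := by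
        field_simp
      rw [he, mul_one] at h
      exact h
    set U := 2*t^2*(1+t^2)*(X - Z) + (1+2*t^2)*t^2*(1-X) with hUdef
    set V := t^2*(1-X) with hVdef
    set R := t*(1+t^2)*Z - t^3*(1-X) with hRdef
    have hkey : U*V - R^2 = t^2*(1+t^2)*(t^2 - (t^2*X^2 + (1+t^2)*Z^2)) := by
      rw [hUdef, hVdef, hRdef]; ring
    have hX1 : X ≤ 1 := by
      by_contra h
      push_neg at h
      have h1 : (0:ℝ) < X^2 - 1 := by nlinarith
      nlinarith [mul_pos ht2 h1, mul_nonneg (by positivity : (0:ℝ) ≤ 1+t^2) (sq_nonneg Z)]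
    have hV : 0 ≤ V := by rw [hVdef]; nlinarith
    have hR : R^2 ≤ U*V := by
      nlinarith [mul_nonneg (mul_nonneg ht2.le (by positivity : (0:ℝ) ≤ 1+t^2))
        (sub_nonneg.mpr hp')]
    have hU : 0 ≤ U := by
      rcases eq_or_lt_of_le hV with hV0 | hV0
      · have hX : X = 1 := by rw [hVdef] at hV0; nlinarith
        have hZ : Z = 0 := by nlinarith
        rw [hUdef, hX, hZ]; nlinarith
      · nlinarith [hR, sq_nonneg R]
    have hpos : 0 < U + V := by
      by_contra h
      push_neg at h
      have hU0 : U = 0 := le_antisymm (by linarith) hU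
      have hV0 : V = 0 := le_antisymm (by linarith) hV
      have hR0 : R = 0 := by
        have : R^2 ≤ 0 := by rw [hU0] at hR; linarith [hR]
        nlinarith [sq_nonneg R]
      have hD : 2*U + 2*V + 4*t^2*V + 4*t*R = 4*t^2*(1+t^2) := by
        rw [hUdef, hVdef, hRdef]; ring
      rw [hU0, hV0, hR0] at hD
      nlinarith
    have hmem := mem_of t U V R hU hV hR hpos
    have hden : 2*U + 2*V + 4*t^2*V + 4*t*R = 4*t^2*(1+t^2) := by
      rw [hUdef, hVdef, hRdef]; ring
    have hN1 : U - V + 2*t*R = 2*t^2*(1+t^2)*X := by rw [hUdef, hVdef, hRdef]; ring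
    have hN2 : 4*t^2*V + 4*t*R = 4*t^2*(1+t^2)*Z := by rw [hVdef, hRdef]; ring
    have hx : 2*(U - V + 2*t*R)/(2*U + 2*V + 4*t^2*V + 4*t*R) = X := by
      rw [hden, hN1]; field_simp; ring
    have hz : (4*t^2*V + 4*t*R)/(2*U + 2*V + 4*t^2*V + 4*t*R) = Z := by
      rw [hden, hN2]
      field_simp
    rw [hx, hz] at hmem
    exact hmem
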